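/- If an eligible node u of the cotree is a parallel node with exactly one non-hollow child v, and v is non-completion-forced, then the completion anchored at u is not an inclusion-minimal constrained cograph completion of G+x. -/

import Mathlib

universe u

def IsCograph {α : Type*} (G : SimpleGraph α) : Prop :=
  ¬ ∃ f : Fin 4 → α, Function.Injective f ∧
      ∀ i j : Fin 4, G.Adj (f i) (f j) ↔ (i.val + 1 = j.val ∨ j.val + 1 = i.val)

inductive Cotree (V : Type u) : Type u where
  | leaf : V → Cotree V
  | node : Bool → List (Cotree V) → Cotree V

namespace Cotree

variable {V : Type u}

def leaves : Cotree V → List V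
  | .leaf v => [v]
  | .node _ ts => ts.attach.flatMap (fun t => t.1.leaves)

decreasing_by simp_wf; have := List.sizeOf_lt_of_mem t.2; omega

def subtrees : Cotree V → List (Cotree V)
  | .leaf v => [.leaf v]
  | .node b ts => .node b ts :: ts.attach.flatMap (fun t => t.1.subtrees)

decreasing_by simp_wf; have := List.sizeOf_lt_of_mem t.2; omega

def children : Cotree V → List (Cotree V)
  | .leaf _ => []
  | .node _ ts => ts

def isSeries : Cotree V → Prop
  | .node true _ => True
  | _ => False

def isParallel : Cotree V → Prop
  | .node false _ => True
  | _ => False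

def adj : Cotree V → V → V → Prop
  | .leaf _, _, _ => False
  | .node b ts, x, y =>
      (∃ t ∈ ts.attach, adj t.1 x y) ∨
      (b = true ∧ ∃ t ∈ ts.attach, ∃ s ∈ ts.attach,
        t.1 ≠ s.1 ∧ x ∈ t.1.leaves ∧ y ∈ s.1.leaves)

decreasing_by simp_wf; have := List.sizeOf_lt_of_mem t.2; omega

def valid : Cotree V → Prop
  | .leaf _ => True
  | .node b ts => 2 ≤ ts.length ∧ ∀ t ∈ ts.attach, valid t.1 ∧
      ∀ b' ts', t.1 = .node b' ts' → b' ≠ b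

decreasing_by simp_wf; have := List.sizeOf_lt_of_mem t.2; omega

def hollow (N : Set V) (t : Cotree V) : Prop := ∀ v ∈ t.leaves, v ∉ N
def full (N : Set V) (t : Cotree V) : Prop := ∀ v ∈ t.leaves, v ∈ N
def uniform (N : Set V) (t : Cotree V) : Prop := full N t ∨ hollow N t
def mixed (N : Set V) (t : Cotree V) : Prop := ¬ uniform N t

def forced (N : Set V) : Cotree V → Prop
  | .leaf v => v ∈ N
  | .node b ts =>
      full N (.node b ts) ∨
      (b = false ∧ ∀ t ∈ ts, ¬ hollow N t) ∨
      (b = true ∧ ∀ t ∈ ts.attach, forced N t.1)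

decreasing_by simp_wf; have := List.sizeOf_lt_of_mem t.2; omega

def eligible (N : Set V) : Cotree V → Cotree V → Prop
  | .leaf v, u => u = .leaf v
  | .node b ts, u => u = .node b ts ∨
      ∃ t ∈ ts.attach, eligible N t.1 u ∧
        (b = false → ∀ s ∈ ts, s ≠ t.1 → hollow N s)

decreasing_by simp_wf; have := List.sizeOf_lt_of_mem t.2; omega

def IsLcaLeaves (T u : Cotree V) (x y : V) : Prop :=
  u ∈ T.subtrees ∧ x ∈ u.leaves ∧ y ∈ u.leaves ∧
    ∀ c ∈ u.children, ¬ (x ∈ c.leaves ∧ y ∈ c.leaves)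

def IsLcaNodeLeaf (T w u : Cotree V) (y : V) : Prop :=
  w ∈ T.subtrees ∧ u ∈ w.subtrees ∧ y ∈ w.leaves ∧
    ∀ c ∈ w.children, ¬ (u ∈ c.subtrees ∧ y ∈ c.leaves)

def graphOf (T : Cotree V) : SimpleGraph V :=
  SimpleGraph.fromRel (fun a b => T.adj a b)

def graphPlus (T : Cotree V) (N : Set V) : SimpleGraph (Option V) :=
  SimpleGraph.fromRel (fun a b =>
    match a, b with
    | some u, some v => T.adj u v
    | none, some v => v ∈ N
    | _, _ => False)

def IsConstrainedCompletion (T : Cotree V) (Nx N' : Set V) : Prop :=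
  Nx ⊆ N' ∧ (∀ v ∈ N', v ∈ T.leaves) ∧ IsCograph (graphPlus T N')

def IsMinimalConstrainedCompletion (T : Cotree V) (Nx N' : Set V) : Prop :=
  IsConstrainedCompletion T Nx N' ∧
    ∀ N'' ⊆ N', IsConstrainedCompletion T Nx N'' → N'' = N'

def IsInsertionNode (T : Cotree V) (N' : Set V) (u : Cotree V) : Prop :=
  u ∈ T.subtrees ∧ mixed N' u ∧ (∀ c ∈ u.children, uniform N' c) ∧
    ∀ y ∈ T.leaves, y ∉ u.leaves →
      (y ∈ N' ↔ ∃ w, IsLcaNodeLeaf T w u y ∧ w.isSeries)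

def IsCMInsertionNode (T : Cotree V) (Nx : Set V) (u : Cotree V) : Prop :=
  ∃ N', IsMinimalConstrainedCompletion T Nx N' ∧ IsInsertionNode T N' u

def anchored (T u : Cotree V) (Nx : Set V) : Set V :=
  Nx ∪ {y | y ∈ T.leaves ∧ y ∉ u.leaves ∧ ∃ w, IsLcaNodeLeaf T w u y ∧ w.isSeries}
     ∪ {y | ∃ c ∈ u.children, ¬ hollow Nx c ∧ y ∈ c.leaves}

section Aux
variable {V : Type u} {W : Type*}

theorem leaves_node (b : Bool) (ts : List (Cotree V)) :
    (node b ts).leaves = ts.flatMap leaves := by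
  conv_rhs => rw [← List.attach_map_subtype_val ts, List.flatMap_map]
  rw [leaves]

theorem exists_attach {ts : List (Cotree V)} {P : Cotree V → Prop} :
    (∃ t ∈ ts.attach, P t.1) ↔ ∃ t ∈ ts, P t := by
  constructor
  · rintro ⟨t, -, h⟩; exact ⟨t.1, t.2, h⟩
  · rintro ⟨t, ht, h⟩; exact ⟨⟨t, ht⟩, List.mem_attach _ _, h⟩

theorem adj_node_iff (b : Bool) (ts : List (Cotree V)) (x y : V) :
    adj (node b ts) x y ↔ (∃ t ∈ ts, adj t x y) ∨
      (b = true ∧ ∃ t ∈ ts, ∃ s ∈ ts, t ≠ s ∧ x ∈ t.leaves ∧ y ∈ s.leaves) := by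
  rw [adj]
  constructor
  · rintro (h | ⟨hb, h⟩)
    · exact Or.inl (exists_attach.mp h)
    · refine Or.inr ⟨hb, ?_⟩
      obtain ⟨t, -, s, -, h⟩ := h
      exact ⟨t.1, t.2, s.1, s.2, h⟩
  · rintro (h | ⟨hb, t, ht, s, hs, h⟩)
    · exact Or.inl (exists_attach.mpr h)
    · exact Or.inr ⟨hb, ⟨t, ht⟩, List.mem_attach _ _, ⟨s, hs⟩, List.mem_attach _ _, h⟩

theorem adj_symm : ∀ (t : Cotree V) {x y : V}, adj t x y → adj t y x
  | .leaf v, x, y, h => by rw [adj] at h; exact h.elim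
  | .node b ts, x, y, h => by
    rw [adj_node_iff] at h ⊢
    rcases h with ⟨t, ht, h⟩ | ⟨hb, t, ht, s, hs, hne, hx, hy⟩
    · exact Or.inl ⟨t, ht, adj_symm t h⟩
    · exact Or.inr ⟨hb, s, hs, t, ht, Ne.symm hne, hy, hx⟩
decreasing_by simp_wf; have := List.sizeOf_lt_of_mem ht; omega

theorem adj_mem_leaves : ∀ (t : Cotree V) {x y : V}, adj t x y → x ∈ t.leaves ∧ y ∈ t.leaves
  | .leaf v, x, y, h => by rw [adj] at h; exact h.elim
  | .node b ts, x, y, h => by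
    rw [adj_node_iff] at h
    rw [leaves_node]
    rcases h with ⟨t, ht, h⟩ | ⟨hb, t, ht, s, hs, hne, hx, hy⟩
    · obtain ⟨h1, h2⟩ := adj_mem_leaves t h
      exact ⟨List.mem_flatMap.mpr ⟨t, ht, h1⟩, List.mem_flatMap.mpr ⟨t, ht, h2⟩⟩
    · exact ⟨List.mem_flatMap.mpr ⟨t, ht, hx⟩, List.mem_flatMap.mpr ⟨s, hs, hy⟩⟩
decreasing_by simp_wf; have := List.sizeOf_lt_of_mem ht; omega

theorem subtrees_node (b : Bool) (ts : List (Cotree V)) :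
    (node b ts).subtrees = node b ts :: ts.flatMap subtrees := by
  rw [subtrees]
  congr 1
  conv_rhs => rw [← List.attach_map_subtype_val ts, List.flatMap_map]

theorem self_mem_subtrees : ∀ (t : Cotree V), t ∈ t.subtrees
  | .leaf v => by rw [subtrees]; exact List.mem_singleton.mpr rfl
  | .node b ts => by rw [subtrees_node]; exact List.mem_cons_self

theorem mem_subtrees_of_child {c : Cotree V} {b : Bool} {ts : List (Cotree V)}
    (hc : c ∈ ts) {s : Cotree V} (hs : s ∈ c.subtrees) : s ∈ (node b ts).subtrees := by
  rw [subtrees_node]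
  exact List.mem_cons_of_mem _ (List.mem_flatMap.mpr ⟨c, hc, hs⟩)

theorem leaves_subset_of_mem_subtrees_aux : ∀ (n : Nat) (t : Cotree V) {s : Cotree V},
    sizeOf t ≤ n → s ∈ t.subtrees → ∀ x ∈ s.leaves, x ∈ t.leaves := by
  intro n
  induction n with
  | zero => intro t s ht; cases t <;> simp at ht
  | succ n ih =>
    intro t s ht hs
    cases t with
    | leaf v =>
      rw [subtrees] at hs
      rw [List.mem_singleton.mp hs]; exact fun x h => h
    | node b ts =>
      rw [subtrees_node] at hs
      rcases List.mem_cons.mp hs with h | h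
      · rw [h]; exact fun x hx => hx
      · obtain ⟨c, hc, hsc⟩ := List.mem_flatMap.mp h
        intro x hx
        rw [leaves_node]
        have hsz : sizeOf c ≤ n := by
          have := List.sizeOf_lt_of_mem hc
          simp only [Cotree.node.sizeOf_spec] at ht
          omega
        exact List.mem_flatMap.mpr ⟨c, hc, ih c hsz hsc x hx⟩

theorem leaves_subset_of_mem_subtrees {t s : Cotree V} (hs : s ∈ t.subtrees) :
    ∀ x ∈ s.leaves, x ∈ t.leaves :=
  leaves_subset_of_mem_subtrees_aux (sizeOf t) t le_rfl hs

theorem valid_child {b : Bool} {ts : List (Cotree V)} (h : (node b ts).valid)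
    {c : Cotree V} (hc : c ∈ ts) : c.valid := by
  rw [valid] at h
  exact (h.2 ⟨c, hc⟩ (List.mem_attach _ _)).1

theorem leaves_ne_nil_aux : ∀ (n : Nat) (t : Cotree V), sizeOf t ≤ n → t.valid → t.leaves ≠ [] := by
  intro n
  induction n with
  | zero => intro t ht; cases t <;> simp at ht
  | succ n ih =>
    intro t ht hv
    cases t with
    | leaf v => rw [leaves]; simp
    | node b ts =>
      rw [leaves_node]
      have h2 : 2 ≤ ts.length := by rw [valid] at hv; exact hv.1
      cases ts with
      | nil => simp at h2
      | cons c ts' =>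
        have hc : c ∈ c :: ts' := List.mem_cons_self
        have hs : sizeOf c ≤ n := by
          have := List.sizeOf_lt_of_mem hc
          simp only [Cotree.node.sizeOf_spec] at ht
          omega
        have := ih c hs (valid_child hv hc)
        simp only [List.flatMap_cons, ne_eq, List.append_eq_nil_iff]
        tauto

theorem leaves_ne_nil (t : Cotree V) (h : t.valid) : t.leaves ≠ [] :=
  leaves_ne_nil_aux (sizeOf t) t le_rfl h

end Aux
section Aux2
variable {V : Type u}

theorem flatMap_decomp {p q : List (Cotree V)} {t0 : Cotree V} :
    (p ++ t0 :: q).flatMap leaves = p.flatMap leaves ++ (t0.leaves ++ q.flatMap leaves) := by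
  rw [List.flatMap_append, List.flatMap_cons]

theorem nd_disjoint {p q : List (Cotree V)} {t0 : Cotree V}
    (h : ((p ++ t0 :: q).flatMap leaves).Nodup) {x : V} (hx : x ∈ t0.leaves) :
    ∀ s ∈ p ++ q, x ∉ s.leaves := by
  rw [flatMap_decomp] at h
  rw [List.nodup_append] at h
  obtain ⟨h1, h2, h3⟩ := h
  rw [List.nodup_append] at h2
  intro s hs hxs
  rcases List.mem_append.mp hs with hsp | hsq
  · exact h3 x (List.mem_flatMap.mpr ⟨s, hsp, hxs⟩) x (List.mem_append_left _ hx) rfl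
  · exact h2.2.2 x hx x (List.mem_flatMap.mpr ⟨s, hsq, hxs⟩) rfl

theorem nodup_component {ts : List (Cotree V)} (h : (ts.flatMap leaves).Nodup)
    {t : Cotree V} (ht : t ∈ ts) : t.leaves.Nodup := by
  obtain ⟨p, q, rfl⟩ := List.append_of_mem ht
  rw [flatMap_decomp, List.nodup_append] at h
  exact ((List.nodup_append.mp h.2.1)).1

theorem unique_child {ts : List (Cotree V)} (h : (ts.flatMap leaves).Nodup)
    {t1 t2 : Cotree V} (h1 : t1 ∈ ts) (h2 : t2 ∈ ts) {x : V}
    (hx1 : x ∈ t1.leaves) (hx2 : x ∈ t2.leaves) : t1 = t2 := by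
  by_contra hne
  obtain ⟨p, q, rfl⟩ := List.append_of_mem h1
  have h2' : t2 ∈ p ++ q := by
    rcases List.mem_append.mp h2 with h | h
    · exact List.mem_append_left _ h
    · rcases List.mem_cons.mp h with h | h
      · exact absurd h.symm hne
      · exact List.mem_append_right _ h
  exact nd_disjoint h hx1 t2 h2' hx2

theorem valid_of_mem_subtrees : ∀ (n : Nat) (t : Cotree V) {s : Cotree V},
    sizeOf t ≤ n → t.valid → s ∈ t.subtrees → s.valid := by
  intro n
  induction n with
  | zero => intro t s ht; cases t <;> simp at ht
  | succ n ih =>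
    intro t s ht hv hs
    cases t with
    | leaf v =>
      rw [subtrees] at hs
      rw [List.mem_singleton.mp hs]; trivial
    | node b ts =>
      rw [subtrees_node] at hs
      rcases List.mem_cons.mp hs with h | h
      · rw [h]; exact hv
      · obtain ⟨c, hc, hsc⟩ := List.mem_flatMap.mp h
        have hsz : sizeOf c ≤ n := by
          have := List.sizeOf_lt_of_mem hc
          simp only [Cotree.node.sizeOf_spec] at ht
          omega
        exact ih c hsz (valid_child hv hc) hsc

theorem nodup_of_mem_subtrees : ∀ (n : Nat) (t : Cotree V) {s : Cotree V},
    sizeOf t ≤ n → t.leaves.Nodup → s ∈ t.subtrees → s.leaves.Nodup := by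
  intro n
  induction n with
  | zero => intro t s ht; cases t <;> simp at ht
  | succ n ih =>
    intro t s ht hnd hs
    cases t with
    | leaf v =>
      rw [subtrees] at hs
      rw [List.mem_singleton.mp hs]; exact hnd
    | node b ts =>
      rw [subtrees_node] at hs
      rcases List.mem_cons.mp hs with h | h
      · rw [h]; exact hnd
      · obtain ⟨c, hc, hsc⟩ := List.mem_flatMap.mp h
        have hsz : sizeOf c ≤ n := by
          have := List.sizeOf_lt_of_mem hc
          simp only [Cotree.node.sizeOf_spec] at ht
          omega
        rw [leaves_node] at hnd
        exact ih c hsz (nodup_component hnd hc) hsc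

theorem eligible_node_iff (Nx : Set V) (b : Bool) (ts : List (Cotree V)) (u : Cotree V) :
    eligible Nx (node b ts) u ↔ u = node b ts ∨
      ∃ t ∈ ts, eligible Nx t u ∧ (b = false → ∀ s ∈ ts, s ≠ t → hollow Nx s) := by
  rw [eligible]
  constructor
  · rintro (h | h)
    · exact Or.inl h
    · exact Or.inr (exists_attach.mp h)
  · rintro (h | h)
    · exact Or.inl h
    · exact Or.inr (exists_attach.mpr h)

theorem eligible_mem_subtrees : ∀ (n : Nat) (t : Cotree V) {Nx : Set V} {u : Cotree V},
    sizeOf t ≤ n → eligible Nx t u → u ∈ t.subtrees := by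
  intro n
  induction n with
  | zero => intro t Nx u ht; cases t <;> simp at ht
  | succ n ih =>
    intro t Nx u ht he
    cases t with
    | leaf v =>
      rw [eligible] at he
      rw [he, subtrees]; exact List.mem_singleton.mpr rfl
    | node b ts =>
      rcases (eligible_node_iff Nx b ts u).mp he with h | ⟨c, hc, hel, -⟩
      · rw [h]; exact self_mem_subtrees _
      · have hsz : sizeOf c ≤ n := by
          have := List.sizeOf_lt_of_mem hc
          simp only [Cotree.node.sizeOf_spec] at ht
          omega
        exact mem_subtrees_of_child hc (ih c hsz hel)

def emb : Cotree V → Cotree (Option V)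
  | .leaf v => .leaf (some v)
  | .node b ts => .node b (ts.attach.map (fun t => emb t.1))
decreasing_by simp_wf; have := List.sizeOf_lt_of_mem t.2; omega

theorem emb_node (b : Bool) (ts : List (Cotree V)) :
    emb (node b ts) = node b (ts.map emb) := by
  rw [emb]
  congr 1
  conv_rhs => rw [← List.attach_map_subtype_val ts, List.map_map]
  rfl

theorem emb_leaves : ∀ (n : Nat) (t : Cotree V), sizeOf t ≤ n →
    (emb t).leaves = t.leaves.map some := by
  intro n
  induction n with
  | zero => intro t ht; cases t <;> simp at ht
  | succ n ih =>
    intro t ht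
    cases t with
    | leaf v => rw [emb, leaves, leaves]; rfl
    | node b ts =>
      rw [emb_node, leaves_node, leaves_node, List.map_flatMap, List.flatMap_map]
      apply List.flatMap_congr
      intro t' ht'
      have hsz : sizeOf t' ≤ n := by
        have := List.sizeOf_lt_of_mem ht'
        simp only [Cotree.node.sizeOf_spec] at ht
        omega
      exact ih t' hsz

theorem emb_inj : ∀ (n : Nat) (s t : Cotree V), sizeOf s ≤ n → emb s = emb t → s = t := by
  intro n
  induction n with
  | zero => intro s t hs; cases s <;> simp at hs
  | succ n ih =>
    intro s t hs he
    cases s with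
    | leaf a =>
      cases t with
      | leaf b =>
        rw [emb, emb] at he
        injection he with h
        injection h with h2
        rw [h2]
      | node b ts => rw [emb, emb_node] at he; exact absurd he (by simp)
    | node b ts =>
      cases t with
      | leaf a => rw [emb_node, emb] at he; exact absurd he (by simp)
      | node b' ts' =>
        rw [emb_node, emb_node, Cotree.node.injEq] at he
        obtain ⟨hb, hts⟩ := he
        subst hb
        congr 1
        have hsz : ∀ c ∈ ts, sizeOf c ≤ n := by
          intro c hc
          have := List.sizeOf_lt_of_mem hc
          simp only [Cotree.node.sizeOf_spec] at hs
          omega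
        clear hs
        induction ts generalizing ts' with
        | nil => cases ts' with
          | nil => rfl
          | cons c cs => exact absurd hts (by simp)
        | cons c cs ihl =>
          cases ts' with
          | nil => exact absurd hts (by simp)
          | cons c' cs' =>
            simp only [List.map_cons, List.cons.injEq] at hts
            have h1 := ih c c' (hsz c (List.mem_cons_self)) hts.1
            have h2 := ihl cs' hts.2 (fun d hd => hsz d (List.mem_cons_of_mem _ hd))
            rw [h1, h2]

theorem mem_emb_leaves {t : Cotree V} {a : Option V} :
    a ∈ (emb t).leaves ↔ ∃ x, a = some x ∧ x ∈ t.leaves := by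
  rw [emb_leaves (sizeOf t) t le_rfl, List.mem_map]
  constructor
  · rintro ⟨x, hx, rfl⟩; exact ⟨x, rfl, hx⟩
  · rintro ⟨x, rfl, hx⟩; exact ⟨x, hx, rfl⟩

theorem adj_emb : ∀ (n : Nat) (t : Cotree V), sizeOf t ≤ n → ∀ (a b : Option V),
    adj (emb t) a b ↔ ∃ x y, a = some x ∧ b = some y ∧ adj t x y := by
  intro n
  induction n with
  | zero => intro t ht; cases t <;> simp at ht
  | succ n ih =>
    intro t ht a b
    cases t with
    | leaf v =>
      rw [emb, adj]
      simp only [false_iff, not_exists]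
      intro x y
      rw [adj]
      simp
    | node b' ts =>
      have hsz : ∀ c ∈ ts, sizeOf c ≤ n := by
        intro c hc
        have := List.sizeOf_lt_of_mem hc
        simp only [Cotree.node.sizeOf_spec] at ht
        omega
      rw [emb_node, adj_node_iff]
      constructor
      · rintro (⟨t', ht', hadj⟩ | ⟨hb, t', ht', s', hs', hne, ha, hb2⟩)
        · obtain ⟨c, hc, rfl⟩ := List.mem_map.mp ht'
          obtain ⟨x, y, rfl, rfl, hxy⟩ := (ih c (hsz c hc) a b).mp hadj
          exact ⟨x, y, rfl, rfl, (adj_node_iff b' ts x y).mpr (Or.inl ⟨c, hc, hxy⟩)⟩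
        · obtain ⟨c, hc, rfl⟩ := List.mem_map.mp ht'
          obtain ⟨d, hd, rfl⟩ := List.mem_map.mp hs'
          obtain ⟨x, rfl, hx⟩ := mem_emb_leaves.mp ha
          obtain ⟨y, rfl, hy⟩ := mem_emb_leaves.mp hb2
          refine ⟨x, y, rfl, rfl, (adj_node_iff b' ts x y).mpr (Or.inr ⟨hb, c, hc, d, hd, ?_, hx, hy⟩)⟩
          intro hcd; exact hne (by rw [hcd])
      · rintro ⟨x, y, rfl, rfl, hxy⟩
        rcases (adj_node_iff b' ts x y).mp hxy with ⟨c, hc, hadj⟩ | ⟨hb, c, hc, d, hd, hne, hx, hy⟩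
        · exact Or.inl ⟨emb c, List.mem_map_of_mem hc,
            (ih c (hsz c hc) _ _).mpr ⟨x, y, rfl, rfl, hadj⟩⟩
        · refine Or.inr ⟨hb, emb c, List.mem_map_of_mem hc, emb d, List.mem_map_of_mem hd,
            ?_, mem_emb_leaves.mpr ⟨x, rfl, hx⟩, mem_emb_leaves.mpr ⟨y, rfl, hy⟩⟩
          intro h
          exact hne (emb_inj (sizeOf c) c d le_rfl h)

theorem adj_emb_some {t : Cotree V} {x y : V} :
    adj (emb t) (some x) (some y) ↔ adj t x y := by
  rw [adj_emb (sizeOf t) t le_rfl]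
  constructor
  · rintro ⟨x', y', hx, hy, h⟩
    injection hx with hx; injection hy with hy
    rw [hx, hy]; exact h
  · intro h; exact ⟨x, y, rfl, rfl, h⟩

theorem not_adj_emb_none_left {t : Cotree V} {z : Option V} : ¬ adj (emb t) none z := by
  rw [adj_emb (sizeOf t) t le_rfl]
  rintro ⟨x, y, h, -⟩
  cases h

theorem not_adj_emb_none_right {t : Cotree V} {z : Option V} : ¬ adj (emb t) z none := by
  rw [adj_emb (sizeOf t) t le_rfl]
  rintro ⟨x, y, -, h, -⟩
  cases h

theorem none_not_mem_emb_leaves {t : Cotree V} : none ∉ (emb t).leaves := by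
  rw [mem_emb_leaves]
  rintro ⟨x, h, -⟩
  cases h

end Aux2
section Aux3
variable {V : Type u}

theorem graphOf_adj {t : Cotree V} {a b : V} :
    (graphOf t).Adj a b ↔ a ≠ b ∧ adj t a b := by
  rw [graphOf, SimpleGraph.fromRel_adj]
  constructor
  · rintro ⟨hne, h | h⟩
    · exact ⟨hne, h⟩
    · exact ⟨hne, adj_symm t h⟩
  · rintro ⟨hne, h⟩
    exact ⟨hne, Or.inl h⟩

theorem isCograph_graphOf : ∀ (n : Nat) (t : Cotree V), sizeOf t ≤ n →
    t.leaves.Nodup → IsCograph (graphOf t) := by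
  intro n
  induction n with
  | zero => intro t ht; cases t <;> simp at ht
  | succ n ih =>
    intro t ht hnd
    rintro ⟨f, finj, hf⟩
    have h01 : (graphOf t).Adj (f 0) (f 1) := (hf 0 1).mpr (Or.inl rfl)
    have h12 : (graphOf t).Adj (f 1) (f 2) := (hf 1 2).mpr (Or.inl rfl)
    have h23 : (graphOf t).Adj (f 2) (f 3) := (hf 2 3).mpr (Or.inl rfl)
    have h02 : ¬ (graphOf t).Adj (f 0) (f 2) := fun h => by
      rcases (hf 0 2).mp h with h' | h' <;> revert h' <;> decide
    have h03 : ¬ (graphOf t).Adj (f 0) (f 3) := fun h => by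
      rcases (hf 0 3).mp h with h' | h' <;> revert h' <;> decide
    have h13 : ¬ (graphOf t).Adj (f 1) (f 3) := fun h => by
      rcases (hf 1 3).mp h with h' | h' <;> revert h' <;> decide
    cases t with
    | leaf v =>
      have := (graphOf_adj.mp h01).2
      rw [adj] at this
      exact this
    | node b ts =>
      have hsz : ∀ c ∈ ts, sizeOf c ≤ n := by
        intro c hc
        have := List.sizeOf_lt_of_mem hc
        simp only [Cotree.node.sizeOf_spec] at ht
        omega
      rw [leaves_node] at hnd
      have m0 : f 0 ∈ (node b ts).leaves := (adj_mem_leaves _ (graphOf_adj.mp h01).2).1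
      have m1 : f 1 ∈ (node b ts).leaves := (adj_mem_leaves _ (graphOf_adj.mp h01).2).2
      have m2 : f 2 ∈ (node b ts).leaves := (adj_mem_leaves _ (graphOf_adj.mp h12).2).2
      have m3 : f 3 ∈ (node b ts).leaves := (adj_mem_leaves _ (graphOf_adj.mp h23).2).2
      rw [leaves_node] at m0 m1 m2 m3
      obtain ⟨c0, hc0, hm0⟩ := List.mem_flatMap.mp m0
      obtain ⟨c1, hc1, hm1⟩ := List.mem_flatMap.mp m1
      obtain ⟨c2, hc2, hm2⟩ := List.mem_flatMap.mp m2
      obtain ⟨c3, hc3, hm3⟩ := List.mem_flatMap.mp m3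
      -- all four children are equal
      have heq : c0 = c1 ∧ c1 = c2 ∧ c2 = c3 := by
        cases b with
        | false =>
          have key : ∀ (i j : Fin 4), (graphOf (node false ts)).Adj (f i) (f j) →
              ∀ ci cj, ci ∈ ts → cj ∈ ts → f i ∈ ci.leaves → f j ∈ cj.leaves → ci = cj := by
            intro i j hadj ci cj hci hcj hfi hfj
            rcases (adj_node_iff false ts _ _).mp (graphOf_adj.mp hadj).2 with
              ⟨s, hs, hadj'⟩ | ⟨hb, -⟩
            · obtain ⟨hi', hj'⟩ := adj_mem_leaves s hadj'
              rw [unique_child hnd hci hs hfi hi', unique_child hnd hcj hs hfj hj']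
            · exact absurd hb (by simp)
          exact ⟨key 0 1 h01 c0 c1 hc0 hc1 hm0 hm1, key 1 2 h12 c1 c2 hc1 hc2 hm1 hm2,
            key 2 3 h23 c2 c3 hc2 hc3 hm2 hm3⟩
        | true =>
          have key : ∀ (i j : Fin 4), ¬ (graphOf (node true ts)).Adj (f i) (f j) → i ≠ j →
              ∀ ci cj, ci ∈ ts → cj ∈ ts → f i ∈ ci.leaves → f j ∈ cj.leaves → ci = cj := by
            intro i j hnadj hij ci cj hci hcj hfi hfj
            by_contra hne
            exact hnadj (graphOf_adj.mpr ⟨finj.ne hij,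
              (adj_node_iff true ts _ _).mpr (Or.inr ⟨rfl, ci, hci, cj, hcj, hne, hfi, hfj⟩)⟩)
          have e02 := key 0 2 h02 (by decide) c0 c2 hc0 hc2 hm0 hm2
          have e03 := key 0 3 h03 (by decide) c0 c3 hc0 hc3 hm0 hm3
          have e13 := key 1 3 h13 (by decide) c1 c3 hc1 hc3 hm1 hm3
          exact ⟨e03.trans e13.symm, e13.trans (e03.symm.trans e02), e02.symm.trans e03⟩
      obtain ⟨e01, e12, e23⟩ := heq
      set t0 := c0 with ht0
      have hmem : ∀ i : Fin 4, f i ∈ t0.leaves := by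
        intro i
        fin_cases i
        · exact hm0
        · exact e01 ▸ hm1
        · exact (e01.trans e12) ▸ hm2
        · exact (e01.trans (e12.trans e23)) ▸ hm3
      have keyiff : ∀ i j : Fin 4, (graphOf t0).Adj (f i) (f j) ↔
          (graphOf (node b ts)).Adj (f i) (f j) := by
        intro i j
        rw [graphOf_adj, graphOf_adj]
        constructor
        · rintro ⟨hne, h⟩
          exact ⟨hne, (adj_node_iff b ts _ _).mpr (Or.inl ⟨t0, hc0, h⟩)⟩
        · rintro ⟨hne, h⟩
          refine ⟨hne, ?_⟩
          rcases (adj_node_iff b ts _ _).mp h with ⟨s, hs, hadj'⟩ | ⟨hb, s1, hs1, s2, hs2, hne2, hfi, hfj⟩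
          · obtain ⟨hi', hj'⟩ := adj_mem_leaves s hadj'
            rwa [unique_child hnd hs hc0 hi' (hmem i)] at hadj'
          · exact absurd ((unique_child hnd hs1 hc0 hfi (hmem i)).trans
              (unique_child hnd hs2 hc0 hfj (hmem j)).symm) hne2
      exact ih t0 (hsz t0 hc0) (nodup_component hnd hc0)
        ⟨f, finj, fun i j => (keyiff i j).trans (hf i j)⟩

end Aux3
section Aux4
variable {V : Type u}

theorem forall_attach {ts : List (Cotree V)} {P : Cotree V → Prop} :
    (∀ t ∈ ts.attach, P t.1) ↔ ∀ t ∈ ts, P t := by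
  constructor
  · intro h t ht; exact h ⟨t, ht⟩ (List.mem_attach _ _)
  · intro h t _; exact h t.1 t.2

theorem forced_node_iff (Nx : Set V) (b : Bool) (ts : List (Cotree V)) :
    forced Nx (node b ts) ↔ full Nx (node b ts) ∨ (b = false ∧ ∀ t ∈ ts, ¬ hollow Nx t) ∨
      (b = true ∧ ∀ t ∈ ts, forced Nx t) := by
  rw [forced]
  constructor
  · rintro (h | h | ⟨hb, h⟩)
    · exact Or.inl h
    · exact Or.inr (Or.inl h)
    · exact Or.inr (Or.inr ⟨hb, forall_attach.mp h⟩)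
  · rintro (h | h | ⟨hb, h⟩)
    · exact Or.inl h
    · exact Or.inr (Or.inl h)
    · exact Or.inr (Or.inr ⟨hb, forall_attach.mpr h⟩)

theorem flatMap_emb_leaves (l : List (Cotree V)) :
    (l.map emb).flatMap leaves = (l.flatMap leaves).map some := by
  rw [List.flatMap_map, List.map_flatMap]
  apply List.flatMap_congr
  intro t _
  exact emb_leaves (sizeOf t) t le_rfl

open Classical in
theorem lemB : ∀ (n : Nat) (Nx : Set V) (t : Cotree V), sizeOf t ≤ n → t.valid →
    t.leaves.Nodup → ¬ forced Nx t →
    ∃ (t' : Cotree (Option V)) (m : V),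
      List.Perm t'.leaves (none :: t.leaves.map some) ∧
      (∀ a b : V, adj t' (some a) (some b) ↔ adj t a b) ∧
      (∀ y : V, adj t' none (some y) → y ∈ t.leaves) ∧
      (∀ y ∈ Nx, y ∈ t.leaves → adj t' none (some y)) ∧
      m ∈ t.leaves ∧ m ∉ Nx ∧ ¬ adj t' none (some m) := by
  intro n
  induction n with
  | zero => intro Nx t ht; cases t <;> simp at ht
  | succ n ih =>
    intro Nx t ht hv hnd hnf
    cases t with
    | leaf a =>
      rw [forced] at hnf
      refine ⟨node false [leaf none, leaf (some a)], a, ?_, ?_, ?_, ?_, ?_, hnf, ?_⟩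
      case _ =>
        rw [leaves_node]; simp [leaves]
      all_goals
        have hadjF : ∀ z w : Option V,
            ¬ adj (node false [leaf none, leaf (some a)]) z w := by
          intro z w h
          rcases (adj_node_iff _ _ _ _).mp h with ⟨s, hs, h'⟩ | ⟨hb, -⟩
          · rcases List.mem_cons.mp hs with rfl | hs'
            · rw [adj] at h'; exact h'
            · rcases List.mem_cons.mp hs' with rfl | hs''
              · rw [adj] at h'; exact h'
              · simp at hs''
          · simp at hb
      · intro x y
        constructor
        · intro h; exact absurd h (hadjF _ _)
        · intro h; rw [adj] at h; exact h.elim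
      · intro y h; exact absurd h (hadjF _ _)
      · intro y hy hyl
        rw [leaves] at hyl
        rcases List.mem_singleton.mp hyl with rfl
        exact absurd hy hnf
      · rw [leaves]; exact List.mem_singleton.mpr rfl
      · exact hadjF _ _
    | node b ts =>
      have hsz : ∀ c ∈ ts, sizeOf c ≤ n := by
        intro c hc
        have := List.sizeOf_lt_of_mem hc
        simp only [Cotree.node.sizeOf_spec] at ht
        omega
      have hnd' : (ts.flatMap leaves).Nodup := by rwa [leaves_node] at hnd
      rw [forced_node_iff] at hnf
      push_neg at hnf
      obtain ⟨hnfull, hnf2, hnf3⟩ := hnf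
      cases b with
      | false =>
        -- some child is hollow
        obtain ⟨c, hc, hchol⟩ := hnf2 rfl
        set hs := ts.filter (fun s => decide (hollow Nx s)) with hhs
        set ns := ts.filter (fun s => !decide (hollow Nx s)) with hns
        have hmem_hs : ∀ s, s ∈ hs ↔ s ∈ ts ∧ hollow Nx s := by
          intro s; rw [hhs, List.mem_filter]; simp
        have hmem_ns : ∀ s, s ∈ ns ↔ s ∈ ts ∧ ¬ hollow Nx s := by
          intro s; rw [hns, List.mem_filter]; simp
        set inner : Cotree (Option V) := node true [leaf none, node false (ns.map emb)]
          with hinner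
        set t' : Cotree (Option V) := node false (hs.map emb ++ [inner]) with ht'
        have hinner_leaves : inner.leaves = none :: (ns.flatMap leaves).map some := by
          rw [hinner, leaves_node]
          simp only [List.flatMap_cons, List.flatMap_nil, List.append_nil]
          rw [leaves, leaves_node, flatMap_emb_leaves]
          rfl
        have hnone_some : ∀ y : V, adj t' none (some y) ↔ ∃ s ∈ ns, y ∈ s.leaves := by
          intro y
          constructor
          · intro h
            rcases (adj_node_iff _ _ _ _).mp h with ⟨z, hz, h'⟩ | ⟨hb, -⟩
            · rcases List.mem_append.mp hz with hz' | hz'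
              · obtain ⟨s, hs', rfl⟩ := List.mem_map.mp hz'
                exact absurd h' not_adj_emb_none_left
              · rcases List.mem_singleton.mp hz' with rfl
                rcases (adj_node_iff _ _ _ _).mp h' with ⟨z2, hz2, h''⟩ | ⟨-, z1, hz1, z2, hz2, hne, hn1, hn2⟩
                · rcases List.mem_cons.mp hz2 with rfl | hz2'
                  · rw [adj] at h''; exact h''.elim
                  · rcases List.mem_cons.mp hz2' with rfl | h0
                    · rcases (adj_node_iff _ _ _ _).mp h'' with ⟨z3, hz3, h3⟩ | ⟨hb2, -⟩
                      · obtain ⟨s, hs', rfl⟩ := List.mem_map.mp hz3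
                        exact absurd h3 not_adj_emb_none_left
                      · simp at hb2
                    · simp at h0
                · -- join inside inner
                  have hz1' : z1 = leaf none := by
                    rcases List.mem_cons.mp hz1 with rfl | hz1'
                    · rfl
                    · rcases List.mem_cons.mp hz1' with rfl | h0
                      · exfalso
                        rw [leaves_node] at hn1
                        obtain ⟨z4, hz4, hn4⟩ := List.mem_flatMap.mp hn1
                        obtain ⟨s, hs', rfl⟩ := List.mem_map.mp hz4
                        exact none_not_mem_emb_leaves hn4
                      · simp at h0
                  have hz2' : z2 = node false (ns.map emb) := by
                    rcases List.mem_cons.mp hz2 with rfl | hz2'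
                    · exfalso; rw [hz1'] at hne; exact hne rfl
                    · rcases List.mem_cons.mp hz2' with rfl | h0
                      · rfl
                      · simp at h0
                  rw [hz2', leaves_node] at hn2
                  obtain ⟨z4, hz4, hn4⟩ := List.mem_flatMap.mp hn2
                  obtain ⟨s, hs', rfl⟩ := List.mem_map.mp hz4
                  obtain ⟨y', hy', hyl⟩ := mem_emb_leaves.mp hn4
                  injection hy' with hy'
                  exact ⟨s, hs', hy' ▸ hyl⟩
            · simp at hb
          · rintro ⟨s, hs', hyl⟩
            apply (adj_node_iff _ _ _ _).mpr
            refine Or.inl ⟨inner, List.mem_append_right _ (List.mem_singleton.mpr rfl), ?_⟩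
            apply (adj_node_iff _ _ _ _).mpr
            refine Or.inr ⟨rfl, leaf none, List.mem_cons_self, node false (ns.map emb),
              List.mem_cons_of_mem _ (List.mem_cons_self), ?_, ?_, ?_⟩
            · intro h; cases h
            · rw [leaves]; exact List.mem_singleton.mpr rfl
            · rw [leaves_node]
              exact List.mem_flatMap.mpr ⟨emb s, List.mem_map_of_mem hs',
                mem_emb_leaves.mpr ⟨y, rfl, hyl⟩⟩
        obtain ⟨m, hm⟩ := List.exists_mem_of_ne_nil _ (leaves_ne_nil c (valid_child hv hc))
        refine ⟨t', m, ?_, ?_, ?_, ?_, ?_, fun hmNx => hchol m hm hmNx, ?_⟩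
        · -- perm
          rw [ht', leaves_node, List.flatMap_append]
          simp only [List.flatMap_cons, List.flatMap_nil, List.append_nil]
          rw [hinner_leaves, flatMap_emb_leaves, leaves_node]
          refine (List.perm_middle).trans ?_
          apply List.Perm.cons
          rw [← List.map_append, ← List.flatMap_append]
          exact ((List.filter_append_perm _ ts).flatMap_right leaves).map some
        · -- some-some adjacency
          intro x y
          rw [adj_node_iff (V := V) false ts x y]
          constructor
          · intro h
            rcases (adj_node_iff _ _ _ _).mp h with ⟨z, hz, h'⟩ | ⟨hb, -⟩
            · rcases List.mem_append.mp hz with hz' | hz'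
              · obtain ⟨s, hs', rfl⟩ := List.mem_map.mp hz'
                exact Or.inl ⟨s, ((hmem_hs s).mp hs').1, adj_emb_some.mp h'⟩
              · rcases List.mem_singleton.mp hz' with rfl
                rcases (adj_node_iff _ _ _ _).mp h' with ⟨z2, hz2, h''⟩ | ⟨-, z1, hz1, z2, hz2, hne, hn1, hn2⟩
                · rcases List.mem_cons.mp hz2 with rfl | hz2'
                  · rw [adj] at h''; exact h''.elim
                  · rcases List.mem_cons.mp hz2' with rfl | h0
                    · rcases (adj_node_iff _ _ _ _).mp h'' with ⟨z3, hz3, h3⟩ | ⟨hb2, -⟩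
                      · obtain ⟨s, hs', rfl⟩ := List.mem_map.mp hz3
                        exact Or.inl ⟨s, ((hmem_ns s).mp hs').1, adj_emb_some.mp h3⟩
                      · simp at hb2
                    · simp at h0
                · -- join inside inner with some x: impossible
                  exfalso
                  have hz1' : z1 = node false (ns.map emb) := by
                    rcases List.mem_cons.mp hz1 with rfl | hz1' 
                    · rw [leaves] at hn1
                      exact absurd (List.mem_singleton.mp hn1) (by simp)
                    · rcases List.mem_cons.mp hz1' with rfl | h0
                      · rfl
                      · simp at h0
                  have hz2' : z2 = node false (ns.map emb) := by
                    rcases List.mem_cons.mp hz2 with rfl | hz2' 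
                    · rw [leaves] at hn2
                      exact absurd (List.mem_singleton.mp hn2) (by simp)
                    · rcases List.mem_cons.mp hz2' with rfl | h0
                      · rfl
                      · simp at h0
                  exact hne (hz1'.trans hz2'.symm)
            · simp at hb
          · rintro (⟨s, hs', hadj⟩ | ⟨hb, -⟩)
            · apply (adj_node_iff _ _ _ _).mpr
              by_cases hh : hollow Nx s
              · exact Or.inl ⟨emb s, List.mem_append_left _
                  (List.mem_map_of_mem ((hmem_hs s).mpr ⟨hs', hh⟩)), adj_emb_some.mpr hadj⟩
              · refine Or.inl ⟨inner, List.mem_append_right _ (List.mem_singleton.mpr rfl), ?_⟩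
                apply (adj_node_iff _ _ _ _).mpr
                refine Or.inl ⟨node false (ns.map emb),
                  List.mem_cons_of_mem _ (List.mem_cons_self), ?_⟩
                apply (adj_node_iff _ _ _ _).mpr
                exact Or.inl ⟨emb s, List.mem_map_of_mem ((hmem_ns s).mpr ⟨hs', hh⟩),
                  adj_emb_some.mpr hadj⟩
            · simp at hb
        · -- new neighbors inside t
          intro y h
          obtain ⟨s, hs', hyl⟩ := (hnone_some y).mp h
          rw [leaves_node]
          exact List.mem_flatMap.mpr ⟨s, ((hmem_ns s).mp hs').1, hyl⟩
        · -- Nx covered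
          intro y hyNx hyl
          rw [leaves_node] at hyl
          obtain ⟨s, hs', hyl'⟩ := List.mem_flatMap.mp hyl
          apply (hnone_some y).mpr
          refine ⟨s, (hmem_ns s).mpr ⟨hs', fun hh => hh y hyl' hyNx⟩, hyl'⟩
        · rw [leaves_node]
          exact List.mem_flatMap.mpr ⟨c, hc, hm⟩
        · -- m not adjacent
          intro h
          obtain ⟨s, hs', hyl⟩ := (hnone_some m).mp h
          have := unique_child hnd' hc ((hmem_ns s).mp hs').1 hm hyl
          exact ((hmem_ns s).mp hs').2 (this ▸ hchol)
      | true =>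
        obtain ⟨c, hcmem, hcnf⟩ := hnf3 rfl
        obtain ⟨p, q, rfl⟩ := List.append_of_mem hcmem
        have hc : c ∈ p ++ c :: q := List.mem_append_right _ (List.mem_cons_self)
        obtain ⟨c', mc, hp1, hp2, hp3, hp4, hm1, hm2, hm3⟩ :=
          ih Nx c (hsz c hc) (valid_child hv hc) (nodup_component hnd' hc) hcnf
        have hnonec' : none ∈ c'.leaves := hp1.mem_iff.mpr (List.mem_cons_self)
        have hsomec' : ∀ y : V, some y ∈ c'.leaves ↔ y ∈ c.leaves := by
          intro y
          rw [hp1.mem_iff, List.mem_cons]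
          constructor
          · rintro (h | h)
            · exact absurd h (by simp)
            · obtain ⟨y', hy', he⟩ := List.mem_map.mp h
              injection he with he
              exact he ▸ hy'
          · intro h; exact Or.inr (List.mem_map_of_mem h)
        have hc'emb : ∀ s : Cotree V, c' ≠ emb s := by
          intro s h
          exact none_not_mem_emb_leaves (h ▸ hnonec')
        set t' : Cotree (Option V) := node true (p.map emb ++ c' :: q.map emb) with ht'
        have hmemC : ∀ z : Cotree (Option V), z ∈ p.map emb ++ c' :: q.map emb ↔
            z = c' ∨ ∃ s ∈ p ++ q, z = emb s := by
          intro z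
          constructor
          · intro hz
            rcases List.mem_append.mp hz with h | h
            · obtain ⟨s, hs', rfl⟩ := List.mem_map.mp h
              exact Or.inr ⟨s, List.mem_append_left _ hs', rfl⟩
            · rcases List.mem_cons.mp h with rfl | h'
              · exact Or.inl rfl
              · obtain ⟨s, hs', rfl⟩ := List.mem_map.mp h'
                exact Or.inr ⟨s, List.mem_append_right _ hs', rfl⟩
          · rintro (rfl | ⟨s, hs', rfl⟩)
            · exact List.mem_append_right _ (List.mem_cons_self)
            · rcases List.mem_append.mp hs' with h | h
              · exact List.mem_append_left _ (List.mem_map_of_mem h)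
              · exact List.mem_append_right _ (List.mem_cons_of_mem _ (List.mem_map_of_mem h))
        have hsib : ∀ s ∈ p ++ q, s ∈ p ++ c :: q := by
          intro s hs'
          rcases List.mem_append.mp hs' with h | h
          · exact List.mem_append_left _ h
          · exact List.mem_append_right _ (List.mem_cons_of_mem _ h)
        have hnone_some : ∀ y : V, adj t' none (some y) ↔
            (adj c' none (some y) ∨ ∃ s ∈ p ++ q, y ∈ s.leaves) := by
          intro y
          constructor
          · intro h
            rcases (adj_node_iff _ _ _ _).mp h with ⟨z, hz, h'⟩ | ⟨-, z1, hz1, z2, hz2, hne, hn1, hn2⟩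
            · rcases (hmemC z).mp hz with rfl | ⟨s, hs', rfl⟩
              · exact Or.inl h'
              · exact absurd h' not_adj_emb_none_left
            · have hz1' : z1 = c' := by
                rcases (hmemC z1).mp hz1 with rfl | ⟨s, hs', rfl⟩
                · rfl
                · exact absurd hn1 none_not_mem_emb_leaves
              subst hz1'
              rcases (hmemC z2).mp hz2 with rfl | ⟨s, hs', rfl⟩
              · exact absurd rfl hne
              · obtain ⟨y', hy', hyl⟩ := mem_emb_leaves.mp hn2
                injection hy' with hy'
                exact Or.inr ⟨s, hs', hy' ▸ hyl⟩
          · rintro (h | ⟨s, hs', hyl⟩)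
            · exact (adj_node_iff _ _ _ _).mpr (Or.inl ⟨c', (hmemC c').mpr (Or.inl rfl), h⟩)
            · apply (adj_node_iff _ _ _ _).mpr
              refine Or.inr ⟨rfl, c', (hmemC c').mpr (Or.inl rfl), emb s,
                (hmemC _).mpr (Or.inr ⟨s, hs', rfl⟩), hc'emb s, hnonec', ?_⟩
              exact mem_emb_leaves.mpr ⟨y, rfl, hyl⟩
        refine ⟨t', mc, ?_, ?_, ?_, ?_, ?_, hm2, ?_⟩
        · -- perm
          rw [ht', leaves_node, leaves_node, List.flatMap_append, List.flatMap_cons,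
            List.flatMap_append, List.flatMap_cons, flatMap_emb_leaves, flatMap_emb_leaves]
          refine ((hp1.append_right _).append_left _).trans ?_
          rw [List.cons_append, List.map_append, List.map_append]
          exact List.perm_middle
        · -- some-some
          intro x y
          rw [adj_node_iff (V := V) true (p ++ c :: q) x y]
          constructor
          · intro h
            rcases (adj_node_iff _ _ _ _).mp h with ⟨z, hz, h'⟩ | ⟨-, z1, hz1, z2, hz2, hne, hn1, hn2⟩
            · rcases (hmemC z).mp hz with rfl | ⟨s, hs', rfl⟩
              · exact Or.inl ⟨c, hc, (hp2 x y).mp h'⟩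
              · exact Or.inl ⟨s, hsib s hs', adj_emb_some.mp h'⟩
            · -- join
              have hcnotsib : c ∉ p ++ q := fun h => nd_disjoint hnd' hm1 c h hm1
              have key : ∀ z : Cotree (Option V), z ∈ p.map emb ++ c' :: q.map emb →
                  ∀ w : V, some w ∈ z.leaves →
                  ∃ s ∈ p ++ c :: q, (z = emb s ∧ s ≠ c) ∨ (z = c' ∧ s = c) := by
                intro z hz w hw
                rcases (hmemC z).mp hz with rfl | ⟨s, hs', rfl⟩
                · exact ⟨c, hc, Or.inr ⟨rfl, rfl⟩⟩
                · refine ⟨s, hsib s hs', Or.inl ⟨rfl, ?_⟩⟩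
                  intro hsc
                  exact hcnotsib (hsc ▸ hs')
              obtain ⟨s1, hs1, hz1'⟩ := key z1 hz1 x hn1
              obtain ⟨s2, hs2, hz2'⟩ := key z2 hz2 y hn2
              have hx1 : x ∈ s1.leaves := by
                rcases hz1' with ⟨rfl, -⟩ | ⟨rfl, rfl⟩
                · obtain ⟨x', hx', hxl⟩ := mem_emb_leaves.mp hn1
                  injection hx' with hx'
                  exact hx' ▸ hxl
                · exact (hsomec' x).mp hn1
              have hy2 : y ∈ s2.leaves := by
                rcases hz2' with ⟨rfl, -⟩ | ⟨rfl, rfl⟩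
                · obtain ⟨y', hy', hyl⟩ := mem_emb_leaves.mp hn2
                  injection hy' with hy'
                  exact hy' ▸ hyl
                · exact (hsomec' y).mp hn2
              refine Or.inr ⟨rfl, s1, hs1, s2, hs2, ?_, hx1, hy2⟩
              intro hss
              rcases hz1' with ⟨rfl, hs1c⟩ | ⟨rfl, rfl⟩
              · rcases hz2' with ⟨rfl, hs2c⟩ | ⟨rfl, rfl⟩
                · exact hne (by rw [hss])
                · exact hs1c hss
              · rcases hz2' with ⟨rfl, hs2c⟩ | ⟨rfl, -⟩
                · exact hs2c hss.symm
                · exact hne rfl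
          · rintro (⟨s, hs', hadj⟩ | ⟨-, s1, hs1, s2, hs2, hne, hx1, hy2⟩)
            · -- child adjacency
              rcases List.mem_append.mp hs' with h | h
              · exact (adj_node_iff _ _ _ _).mpr (Or.inl ⟨emb s,
                  (hmemC _).mpr (Or.inr ⟨s, List.mem_append_left _ h, rfl⟩), adj_emb_some.mpr hadj⟩)
              · rcases List.mem_cons.mp h with rfl | h'
                · exact (adj_node_iff _ _ _ _).mpr (Or.inl ⟨c', (hmemC _).mpr (Or.inl rfl),
                    (hp2 x y).mpr hadj⟩)
                · exact (adj_node_iff _ _ _ _).mpr (Or.inl ⟨emb s,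
                    (hmemC _).mpr (Or.inr ⟨s, List.mem_append_right _ h', rfl⟩), adj_emb_some.mpr hadj⟩)
            · -- join
              have img : ∀ s : Cotree V, s ∈ p ++ c :: q → ∀ w : V, w ∈ s.leaves →
                  ∃ z ∈ p.map emb ++ c' :: q.map emb, some w ∈ z.leaves ∧
                    (z = emb s ∨ (z = c' ∧ s = c)) := by
                intro s hsm w hw
                by_cases hsc : s = c
                · subst hsc
                  exact ⟨c', (hmemC _).mpr (Or.inl rfl), (hsomec' w).mpr hw, Or.inr ⟨rfl, rfl⟩⟩
                · have hs' : s ∈ p ++ q := by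
                    rcases List.mem_append.mp hsm with h | h
                    · exact List.mem_append_left _ h
                    · rcases List.mem_cons.mp h with rfl | h'
                      · exact absurd rfl hsc
                      · exact List.mem_append_right _ h'
                  exact ⟨emb s, (hmemC _).mpr (Or.inr ⟨s, hs', rfl⟩),
                    mem_emb_leaves.mpr ⟨w, rfl, hw⟩, Or.inl rfl⟩
              obtain ⟨z1, hz1, hw1, hz1'⟩ := img s1 hs1 x hx1
              obtain ⟨z2, hz2, hw2, hz2'⟩ := img s2 hs2 y hy2
              apply (adj_node_iff _ _ _ _).mpr
              refine Or.inr ⟨rfl, z1, hz1, z2, hz2, ?_, hw1, hw2⟩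
              intro hzz
              subst hzz
              rcases hz1' with rfl | ⟨rfl, rfl⟩
              · rcases hz2' with h2 | ⟨rfl, rfl⟩
                · exact hne (emb_inj (sizeOf s1) s1 s2 le_rfl h2)
                · exact hc'emb s1 rfl
              · rcases hz2' with h2 | ⟨-, rfl⟩
                · exact hc'emb s2 h2
                · exact hne rfl
        · -- new neighbors in t
          intro y h
          rw [leaves_node]
          rcases (hnone_some y).mp h with h' | ⟨s, hs', hyl⟩
          · exact List.mem_flatMap.mpr ⟨c, hc, hp3 y h'⟩
          · exact List.mem_flatMap.mpr ⟨s, hsib s hs', hyl⟩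
        · -- Nx covered
          intro y hyNx hyl
          rw [leaves_node] at hyl
          obtain ⟨s, hsm, hyl'⟩ := List.mem_flatMap.mp hyl
          apply (hnone_some y).mpr
          rcases List.mem_append.mp hsm with h | h
          · exact Or.inr ⟨s, List.mem_append_left _ h, hyl'⟩
          · rcases List.mem_cons.mp h with rfl | h'
            · exact Or.inl (hp4 y hyNx hyl')
            · exact Or.inr ⟨s, List.mem_append_right _ h', hyl'⟩
        · rw [leaves_node]
          exact List.mem_flatMap.mpr ⟨c, hc, hm1⟩
        · -- mc not adjacent
          intro h
          rcases (hnone_some mc).mp h with h' | ⟨s, hs', hyl⟩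
          · exact hm3 h'
          · exact nd_disjoint hnd' hm1 s hs' hyl

end Aux4
section Aux5
variable {V : Type u}

theorem lca_lift {b : Bool} {ts : List (Cotree V)} {t0 : Cotree V} (ht0 : t0 ∈ ts)
    {w u : Cotree V} {y : V} (h : IsLcaNodeLeaf t0 w u y) :
    IsLcaNodeLeaf (node b ts) w u y :=
  ⟨mem_subtrees_of_child ht0 h.1, h.2.1, h.2.2.1, h.2.2.2⟩

theorem lemM (Nx : Set V) (cs : List (Cotree V)) (v : Cotree V) (v' : Cotree (Option V)) (m : V)
    (hvcs : v ∈ cs)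
    (hB2 : ∀ a b : V, adj v' (some a) (some b) ↔ adj v a b)
    (hB4 : ∀ y ∈ Nx, y ∈ v.leaves → adj v' none (some y))
    (hBm1 : m ∈ v.leaves) (hBm3 : ¬ adj v' none (some m))
    (hB1 : List.Perm v'.leaves (none :: v.leaves.map some))
    (l0 : V) (hl0v : l0 ∈ v.leaves) (hl0Nx : l0 ∈ Nx)
    (honly : ∀ c ∈ cs, c ≠ v → hollow Nx c) :
    ∀ (n : Nat) (T : Cotree V), sizeOf T ≤ n → T.leaves.Nodup →
      eligible Nx T (node false cs) →
      ∃ T' : Cotree (Option V),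
        List.Perm T'.leaves (none :: T.leaves.map some) ∧
        (∀ a b : V, adj T' (some a) (some b) ↔ adj T a b) ∧
        (∀ y : V, adj T' none (some y) → adj v' none (some y) ∨
          (y ∈ T.leaves ∧ y ∉ (node false cs).leaves ∧
            ∃ w, IsLcaNodeLeaf T w (node false cs) y ∧ w.isSeries)) ∧
        (∀ y ∈ Nx, y ∈ T.leaves → adj T' none (some y)) ∧
        ¬ adj T' none (some m) := by
  intro n
  induction n with
  | zero => intro T hT; cases T <;> simp at hT
  | succ n ihn =>
    intro T hT hnd helig
    cases T with
    | leaf a =>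
      rw [eligible] at helig
      cases helig
    | node b ts =>
      have hsz : ∀ c ∈ ts, sizeOf c ≤ n := by
        intro c hc
        have := List.sizeOf_lt_of_mem hc
        simp only [Cotree.node.sizeOf_spec] at hT
        omega
      have hnd' : (ts.flatMap leaves).Nodup := by rwa [leaves_node] at hnd
      rcases (eligible_node_iff Nx b ts _).mp helig with hEq | ⟨t0, ht0, hel0, hsib⟩
      · -- base case : T = node false cs
        injection hEq with hb hts
        subst hb
        subst hts
        obtain ⟨p, q, rfl⟩ := List.append_of_mem hvcs
        have hvmem : v ∈ p ++ v :: q := List.mem_append_right _ (List.mem_cons_self)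
        have hnonev' : none ∈ v'.leaves := hB1.mem_iff.mpr (List.mem_cons_self)
        have hsomev' : ∀ y : V, some y ∈ v'.leaves ↔ y ∈ v.leaves := by
          intro y
          rw [hB1.mem_iff, List.mem_cons]
          constructor
          · rintro (h | h)
            · exact absurd h (by simp)
            · obtain ⟨y', hy', he⟩ := List.mem_map.mp h
              injection he with he
              exact he ▸ hy'
          · intro h; exact Or.inr (List.mem_map_of_mem h)
        have hv'emb : ∀ s : Cotree V, v' ≠ emb s := by
          intro s h
          exact none_not_mem_emb_leaves (h ▸ hnonev')
        set T' : Cotree (Option V) := node false (p.map emb ++ v' :: q.map emb) with hT'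
        have hmemC : ∀ z : Cotree (Option V), z ∈ p.map emb ++ v' :: q.map emb ↔
            z = v' ∨ ∃ s ∈ p ++ q, z = emb s := by
          intro z
          constructor
          · intro hz
            rcases List.mem_append.mp hz with h | h
            · obtain ⟨s, hs', rfl⟩ := List.mem_map.mp h
              exact Or.inr ⟨s, List.mem_append_left _ hs', rfl⟩
            · rcases List.mem_cons.mp h with rfl | h'
              · exact Or.inl rfl
              · obtain ⟨s, hs', rfl⟩ := List.mem_map.mp h'
                exact Or.inr ⟨s, List.mem_append_right _ hs', rfl⟩
          · rintro (rfl | ⟨s, hs', rfl⟩)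
            · exact List.mem_append_right _ (List.mem_cons_self)
            · rcases List.mem_append.mp hs' with h | h
              · exact List.mem_append_left _ (List.mem_map_of_mem h)
              · exact List.mem_append_right _ (List.mem_cons_of_mem _ (List.mem_map_of_mem h))
        have hsib' : ∀ s ∈ p ++ q, s ∈ p ++ v :: q := by
          intro s hs'
          rcases List.mem_append.mp hs' with h | h
          · exact List.mem_append_left _ h
          · exact List.mem_append_right _ (List.mem_cons_of_mem _ h)
        have hnone_some : ∀ y : V, adj T' none (some y) → adj v' none (some y) := by
          intro y h
          rcases (adj_node_iff _ _ _ _).mp h with ⟨z, hz, h'⟩ | ⟨hb, -⟩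
          · rcases (hmemC z).mp hz with rfl | ⟨s, hs', rfl⟩
            · exact h'
            · exact absurd h' not_adj_emb_none_left
          · simp at hb
        refine ⟨T', ?_, ?_, fun y h => Or.inl (hnone_some y h), ?_, ?_⟩
        · rw [hT', leaves_node, leaves_node, List.flatMap_append, List.flatMap_cons,
            List.flatMap_append, List.flatMap_cons, flatMap_emb_leaves, flatMap_emb_leaves]
          refine ((hB1.append_right _).append_left _).trans ?_
          rw [List.cons_append, List.map_append, List.map_append]
          exact List.perm_middle
        · intro x y
          rw [adj_node_iff (V := V) false (p ++ v :: q) x y]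
          constructor
          · intro h
            rcases (adj_node_iff _ _ _ _).mp h with ⟨z, hz, h'⟩ | ⟨hb, -⟩
            · rcases (hmemC z).mp hz with rfl | ⟨s, hs', rfl⟩
              · exact Or.inl ⟨v, hvmem, (hB2 x y).mp h'⟩
              · exact Or.inl ⟨s, hsib' s hs', adj_emb_some.mp h'⟩
            · simp at hb
          · rintro (⟨s, hs', hadj⟩ | ⟨hb, -⟩)
            · apply (adj_node_iff _ _ _ _).mpr
              rcases List.mem_append.mp hs' with h | h
              · exact Or.inl ⟨emb s, (hmemC _).mpr (Or.inr ⟨s, List.mem_append_left _ h, rfl⟩),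
                  adj_emb_some.mpr hadj⟩
              · rcases List.mem_cons.mp h with rfl | h'
                · exact Or.inl ⟨v', (hmemC _).mpr (Or.inl rfl), (hB2 x y).mpr hadj⟩
                · exact Or.inl ⟨emb s, (hmemC _).mpr (Or.inr ⟨s, List.mem_append_right _ h', rfl⟩),
                    adj_emb_some.mpr hadj⟩
            · simp at hb
        · -- Nx covered
          intro y hyNx hyl
          rw [leaves_node] at hyl
          obtain ⟨s, hsm, hyl'⟩ := List.mem_flatMap.mp hyl
          have hvnotsib : v ∉ p ++ q := fun h => nd_disjoint hnd' hl0v v h hl0v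
          rcases List.mem_append.mp hsm with h | h
          · have hsv : s ≠ v := fun he => hvnotsib (he ▸ List.mem_append_left _ h)
            exact absurd hyNx (honly s (hsib' s (List.mem_append_left _ h)) hsv y hyl')
          · rcases List.mem_cons.mp h with rfl | h'
            · exact (adj_node_iff _ _ _ _).mpr
                (Or.inl ⟨v', (hmemC _).mpr (Or.inl rfl), hB4 y hyNx hyl'⟩)
            · have hsv : s ≠ v := fun he => hvnotsib (he ▸ List.mem_append_right _ h')
              exact absurd hyNx (honly s (hsib' s (List.mem_append_right _ h')) hsv y hyl')
        · intro h
          exact hBm3 (hnone_some m h)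
      · -- recursive case
        obtain ⟨p, q, rfl⟩ := List.append_of_mem ht0
        have ht0mem : t0 ∈ p ++ t0 :: q := List.mem_append_right _ (List.mem_cons_self)
        obtain ⟨T0, hq1, hq2, hq3, hq4, hq5⟩ :=
          ihn t0 (hsz t0 ht0mem) (nodup_component hnd' ht0mem) hel0
        have hnoneT0 : none ∈ T0.leaves := hq1.mem_iff.mpr (List.mem_cons_self)
        have hsomeT0 : ∀ y : V, some y ∈ T0.leaves ↔ y ∈ t0.leaves := by
          intro y
          rw [hq1.mem_iff, List.mem_cons]
          constructor
          · rintro (h | h)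
            · exact absurd h (by simp)
            · obtain ⟨y', hy', he⟩ := List.mem_map.mp h
              injection he with he
              exact he ▸ hy'
          · intro h; exact Or.inr (List.mem_map_of_mem h)
        have hT0emb : ∀ s : Cotree V, T0 ≠ emb s := by
          intro s h
          exact none_not_mem_emb_leaves (h ▸ hnoneT0)
        have husub : node false cs ∈ t0.subtrees := eligible_mem_subtrees (sizeOf t0) t0 le_rfl hel0
        have hul : ∀ x ∈ (node false cs).leaves, x ∈ t0.leaves :=
          leaves_subset_of_mem_subtrees husub
        have hl0u : l0 ∈ (node false cs).leaves := by
          rw [leaves_node]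
          exact List.mem_flatMap.mpr ⟨v, hvcs, hl0v⟩
        have hl0t0 : l0 ∈ t0.leaves := hul l0 hl0u
        have hmu : m ∈ (node false cs).leaves := by
          rw [leaves_node]
          exact List.mem_flatMap.mpr ⟨v, hvcs, hBm1⟩
        have hmt0 : m ∈ t0.leaves := hul m hmu
        have ht0notsib : t0 ∉ p ++ q := fun h => nd_disjoint hnd' hl0t0 t0 h hl0t0
        set T' : Cotree (Option V) := node b (p.map emb ++ T0 :: q.map emb) with hT'
        have hmemC : ∀ z : Cotree (Option V), z ∈ p.map emb ++ T0 :: q.map emb ↔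
            z = T0 ∨ ∃ s ∈ p ++ q, z = emb s := by
          intro z
          constructor
          · intro hz
            rcases List.mem_append.mp hz with h | h
            · obtain ⟨s, hs', rfl⟩ := List.mem_map.mp h
              exact Or.inr ⟨s, List.mem_append_left _ hs', rfl⟩
            · rcases List.mem_cons.mp h with rfl | h'
              · exact Or.inl rfl
              · obtain ⟨s, hs', rfl⟩ := List.mem_map.mp h'
                exact Or.inr ⟨s, List.mem_append_right _ hs', rfl⟩
          · rintro (rfl | ⟨s, hs', rfl⟩)
            · exact List.mem_append_right _ (List.mem_cons_self)
            · rcases List.mem_append.mp hs' with h | h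
              · exact List.mem_append_left _ (List.mem_map_of_mem h)
              · exact List.mem_append_right _ (List.mem_cons_of_mem _ (List.mem_map_of_mem h))
        have hsib' : ∀ s ∈ p ++ q, s ∈ p ++ t0 :: q := by
          intro s hs'
          rcases List.mem_append.mp hs' with h | h
          · exact List.mem_append_left _ h
          · exact List.mem_append_right _ (List.mem_cons_of_mem _ h)
        refine ⟨T', ?_, ?_, ?_, ?_, ?_⟩
        · rw [hT', leaves_node, leaves_node, List.flatMap_append, List.flatMap_cons,
            List.flatMap_append, List.flatMap_cons, flatMap_emb_leaves, flatMap_emb_leaves]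
          refine ((hq1.append_right _).append_left _).trans ?_
          rw [List.cons_append, List.map_append, List.map_append]
          exact List.perm_middle
        · -- some-some
          intro x y
          rw [adj_node_iff (V := V) b (p ++ t0 :: q) x y]
          constructor
          · intro h
            rcases (adj_node_iff _ _ _ _).mp h with ⟨z, hz, h'⟩ | ⟨hb, z1, hz1, z2, hz2, hne, hn1, hn2⟩
            · rcases (hmemC z).mp hz with rfl | ⟨s, hs', rfl⟩
              · exact Or.inl ⟨t0, ht0mem, (hq2 x y).mp h'⟩
              · exact Or.inl ⟨s, hsib' s hs', adj_emb_some.mp h'⟩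
            · have key : ∀ z : Cotree (Option V), z ∈ p.map emb ++ T0 :: q.map emb →
                  ∀ w : V, some w ∈ z.leaves →
                  ∃ s ∈ p ++ t0 :: q, (z = emb s ∧ s ≠ t0) ∨ (z = T0 ∧ s = t0) := by
                intro z hz w hw
                rcases (hmemC z).mp hz with rfl | ⟨s, hs', rfl⟩
                · exact ⟨t0, ht0mem, Or.inr ⟨rfl, rfl⟩⟩
                · refine ⟨s, hsib' s hs', Or.inl ⟨rfl, ?_⟩⟩
                  intro hsc
                  exact ht0notsib (hsc ▸ hs')
              obtain ⟨s1, hs1, hz1'⟩ := key z1 hz1 x hn1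
              obtain ⟨s2, hs2, hz2'⟩ := key z2 hz2 y hn2
              have hx1 : x ∈ s1.leaves := by
                rcases hz1' with ⟨rfl, -⟩ | ⟨rfl, rfl⟩
                · obtain ⟨x', hx', hxl⟩ := mem_emb_leaves.mp hn1
                  injection hx' with hx'
                  exact hx' ▸ hxl
                · exact (hsomeT0 x).mp hn1
              have hy2 : y ∈ s2.leaves := by
                rcases hz2' with ⟨rfl, -⟩ | ⟨rfl, rfl⟩
                · obtain ⟨y', hy', hyl⟩ := mem_emb_leaves.mp hn2
                  injection hy' with hy'
                  exact hy' ▸ hyl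
                · exact (hsomeT0 y).mp hn2
              refine Or.inr ⟨hb, s1, hs1, s2, hs2, ?_, hx1, hy2⟩
              intro hss
              rcases hz1' with ⟨rfl, hs1c⟩ | ⟨rfl, rfl⟩
              · rcases hz2' with ⟨rfl, hs2c⟩ | ⟨rfl, rfl⟩
                · exact hne (by rw [hss])
                · exact hs1c hss
              · rcases hz2' with ⟨rfl, hs2c⟩ | ⟨rfl, -⟩
                · exact hs2c hss.symm
                · exact hne rfl
          · rintro (⟨s, hs', hadj⟩ | ⟨hb, s1, hs1, s2, hs2, hne, hx1, hy2⟩)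
            · apply (adj_node_iff _ _ _ _).mpr
              rcases List.mem_append.mp hs' with h | h
              · exact Or.inl ⟨emb s, (hmemC _).mpr (Or.inr ⟨s, List.mem_append_left _ h, rfl⟩),
                  adj_emb_some.mpr hadj⟩
              · rcases List.mem_cons.mp h with rfl | h'
                · exact Or.inl ⟨T0, (hmemC _).mpr (Or.inl rfl), (hq2 x y).mpr hadj⟩
                · exact Or.inl ⟨emb s, (hmemC _).mpr (Or.inr ⟨s, List.mem_append_right _ h', rfl⟩),
                    adj_emb_some.mpr hadj⟩
            · have img : ∀ s : Cotree V, s ∈ p ++ t0 :: q → ∀ w : V, w ∈ s.leaves →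
                  ∃ z ∈ p.map emb ++ T0 :: q.map emb, some w ∈ z.leaves ∧
                    (z = emb s ∨ (z = T0 ∧ s = t0)) := by
                intro s hsm w hw
                by_cases hsc : s = t0
                · subst hsc
                  exact ⟨T0, (hmemC _).mpr (Or.inl rfl), (hsomeT0 w).mpr hw, Or.inr ⟨rfl, rfl⟩⟩
                · have hs' : s ∈ p ++ q := by
                    rcases List.mem_append.mp hsm with h | h
                    · exact List.mem_append_left _ h
                    · rcases List.mem_cons.mp h with rfl | h'
                      · exact absurd rfl hsc
                      · exact List.mem_append_right _ h'
                  exact ⟨emb s, (hmemC _).mpr (Or.inr ⟨s, hs', rfl⟩),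
                    mem_emb_leaves.mpr ⟨w, rfl, hw⟩, Or.inl rfl⟩
              obtain ⟨z1, hz1, hw1, hz1'⟩ := img s1 hs1 x hx1
              obtain ⟨z2, hz2, hw2, hz2'⟩ := img s2 hs2 y hy2
              apply (adj_node_iff _ _ _ _).mpr
              refine Or.inr ⟨hb, z1, hz1, z2, hz2, ?_, hw1, hw2⟩
              intro hzz
              subst hzz
              rcases hz1' with rfl | ⟨rfl, rfl⟩
              · rcases hz2' with h2 | ⟨rfl, rfl⟩
                · exact hne (emb_inj (sizeOf s1) s1 s2 le_rfl h2)
                · exact hT0emb s1 rfl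
              · rcases hz2' with h2 | ⟨-, rfl⟩
                · exact hT0emb s2 h2
                · exact hne rfl
        · -- none-some characterization
          intro y h
          rcases (adj_node_iff _ _ _ _).mp h with ⟨z, hz, h'⟩ | ⟨hb, z1, hz1, z2, hz2, hne, hn1, hn2⟩
          · rcases (hmemC z).mp hz with rfl | ⟨s, hs', rfl⟩
            · rcases hq3 y h' with h'' | ⟨hyl, hynu, w, hw, hws⟩
              · exact Or.inl h''
              · refine Or.inr ⟨?_, hynu, w, lca_lift ht0mem hw, hws⟩
                rw [leaves_node]
                exact List.mem_flatMap.mpr ⟨t0, ht0mem, hyl⟩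
            · exact absurd h' not_adj_emb_none_left
          · -- join at this node
            have hz1' : z1 = T0 := by
              rcases (hmemC z1).mp hz1 with rfl | ⟨s, hs', rfl⟩
              · rfl
              · exact absurd hn1 none_not_mem_emb_leaves
            subst hz1'
            rcases (hmemC z2).mp hz2 with rfl | ⟨s, hs', rfl⟩
            · exact absurd rfl hne
            · obtain ⟨y', hy', hyl⟩ := mem_emb_leaves.mp hn2
              injection hy' with hy'
              subst hy'
              have hyT : y ∈ (node b (p ++ t0 :: q)).leaves := by
                rw [leaves_node]
                exact List.mem_flatMap.mpr ⟨s, hsib' s hs', hyl⟩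
              have hynu : y ∉ (node false cs).leaves := by
                intro hyu
                exact nd_disjoint hnd' (hul y hyu) s hs' hyl
              refine Or.inr ⟨hyT, hynu, node b (p ++ t0 :: q), ⟨self_mem_subtrees _,
                mem_subtrees_of_child ht0mem husub, hyT, ?_⟩, ?_⟩
              · -- lca children condition
                intro c hcmem ⟨hcu, hcy⟩
                rw [children] at hcmem
                have hl0c : l0 ∈ c.leaves := leaves_subset_of_mem_subtrees hcu l0 hl0u
                have hct0 : c = t0 := unique_child hnd' hcmem ht0mem hl0c hl0t0
                subst hct0
                exact nd_disjoint hnd' hcy s hs' hyl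
              · subst hb
                simp [isSeries]
        · -- Nx covered
          intro y hyNx hyl
          rw [leaves_node] at hyl
          obtain ⟨s, hsm, hyl'⟩ := List.mem_flatMap.mp hyl
          by_cases hyt0 : y ∈ t0.leaves
          · exact (adj_node_iff _ _ _ _).mpr
              (Or.inl ⟨T0, (hmemC _).mpr (Or.inl rfl), hq4 y hyNx hyt0⟩)
          · have hs' : s ∈ p ++ q := by
              rcases List.mem_append.mp hsm with h | h
              · exact List.mem_append_left _ h
              · rcases List.mem_cons.mp h with rfl | h'
                · exact absurd hyl' hyt0
                · exact List.mem_append_right _ h'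
            cases b with
            | false =>
              have hst0 : s ≠ t0 := fun he => hyt0 (he ▸ hyl')
              exact absurd hyNx (hsib rfl s (hsib' s hs') hst0 y hyl')
            | true =>
              apply (adj_node_iff _ _ _ _).mpr
              refine Or.inr ⟨rfl, T0, (hmemC _).mpr (Or.inl rfl), emb s,
                (hmemC _).mpr (Or.inr ⟨s, hs', rfl⟩), hT0emb s, hnoneT0, ?_⟩
              exact mem_emb_leaves.mpr ⟨y, rfl, hyl'⟩
        · -- m not adjacent
          intro h
          rcases (adj_node_iff _ _ _ _).mp h with ⟨z, hz, h'⟩ | ⟨hb, z1, hz1, z2, hz2, hne, hn1, hn2⟩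
          · rcases (hmemC z).mp hz with rfl | ⟨s, hs', rfl⟩
            · exact hq5 h'
            · exact not_adj_emb_none_left h'
          · have hz1' : z1 = T0 := by
              rcases (hmemC z1).mp hz1 with rfl | ⟨s, hs', rfl⟩
              · rfl
              · exact absurd hn1 none_not_mem_emb_leaves
            subst hz1'
            rcases (hmemC z2).mp hz2 with rfl | ⟨s, hs', rfl⟩
            · exact hne rfl
            · obtain ⟨y', hy', hyl⟩ := mem_emb_leaves.mp hn2
              injection hy' with hy'
              subst hy'
              exact nd_disjoint hnd' hmt0 s hs' hyl

end Aux5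
end Cotree

theorem stmt_14 {V : Type u} (T : Cotree V) (Nx : Set V)
    (hval : T.valid) (hnd : T.leaves.Nodup)
    (hNx : ∀ v ∈ Nx, v ∈ T.leaves) (hmix : Cotree.mixed Nx T)
    (u : Cotree V) (hu : u ∈ T.subtrees) (helig : Cotree.eligible Nx T u)
    (hpar : u.isParallel)
    (v : Cotree V) (hv : v ∈ u.children) (hvnh : ¬ Cotree.hollow Nx v)
    (honly : ∀ c ∈ u.children, c ≠ v → Cotree.hollow Nx c)
    (hvnf : ¬ Cotree.forced Nx v) :
    ¬ Cotree.IsMinimalConstrainedCompletion T Nx (Cotree.anchored T u Nx) := by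
  open Cotree in
  intro hmin
  obtain ⟨hcomp, hminimal⟩ := hmin
  cases u with
  | leaf a => simp [isParallel] at hpar
  | node bb cs =>
    cases bb with
    | true => simp [isParallel] at hpar
    | false =>
      rw [children] at hv honly
      have huval : (node false cs).valid := valid_of_mem_subtrees (sizeOf T) T le_rfl hval hu
      have hund : (node false cs).leaves.Nodup := nodup_of_mem_subtrees (sizeOf T) T le_rfl hnd hu
      have hund' : (cs.flatMap leaves).Nodup := by rwa [leaves_node] at hund
      have hvval : v.valid := valid_child huval hv
      have hvnd : v.leaves.Nodup := nodup_component hund' hv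
      obtain ⟨v', m, hB1, hB2, hB3, hB4, hm1, hm2, hm3⟩ :=
        lemB (sizeOf v) Nx v le_rfl hvval hvnd hvnf
      obtain ⟨l0, hl0v, hl0Nx⟩ : ∃ l0 ∈ v.leaves, l0 ∈ Nx := by
        unfold hollow at hvnh
        push_neg at hvnh
        exact hvnh
      obtain ⟨T', hP1, hP2, hP3, hP4, hP5⟩ :=
        lemM Nx cs v v' m hv hB2 hB4 hm1 hm3 hB1 l0 hl0v hl0Nx honly
          (sizeOf T) T le_rfl hnd helig
      set N'' : Set V := {y | adj T' none (some y)} with hN''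
      have hvchild : v ∈ (node false cs).children := by rw [children]; exact hv
      have hsub : N'' ⊆ anchored T (node false cs) Nx := by
        intro y hy
        rcases hP3 y hy with h | ⟨hyT, hynu, w, hw, hws⟩
        · exact Or.inr ⟨v, hvchild, hvnh, hB3 y h⟩
        · exact Or.inl (Or.inr ⟨hyT, hynu, w, hw, hws⟩)
      have hTnd' : T'.leaves.Nodup := by
        rw [hP1.nodup_iff]
        rw [List.nodup_cons]
        constructor
        · intro h
          obtain ⟨y, -, he⟩ := List.mem_map.mp h
          cases he
        · exact hnd.map (Option.some_injective V)
      have hGeq : graphPlus T N'' = graphOf T' := by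
        ext a b
        rw [graphPlus, graphOf, SimpleGraph.fromRel_adj, SimpleGraph.fromRel_adj]
        match a, b with
        | some x, some y =>
          constructor
          · rintro ⟨hne, h | h⟩
            · exact ⟨hne, Or.inl ((hP2 x y).mpr h)⟩
            · exact ⟨hne, Or.inr ((hP2 y x).mpr h)⟩
          · rintro ⟨hne, h | h⟩
            · exact ⟨hne, Or.inl ((hP2 x y).mp h)⟩
            · exact ⟨hne, Or.inr ((hP2 y x).mp h)⟩
        | none, some y =>
          constructor
          · rintro ⟨hne, h | h⟩
            · exact ⟨hne, Or.inl h⟩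
            · exact h.elim
          · rintro ⟨hne, h | h⟩
            · exact ⟨hne, Or.inl h⟩
            · exact ⟨hne, Or.inl (adj_symm T' h)⟩
        | some x, none =>
          constructor
          · rintro ⟨hne, h | h⟩
            · exact h.elim
            · exact ⟨hne, Or.inl (adj_symm T' h)⟩
          · rintro ⟨hne, h | h⟩
            · exact ⟨hne, Or.inr (adj_symm T' h)⟩
            · exact ⟨hne, Or.inr h⟩
        | none, none =>
          constructor
          · rintro ⟨hne, -⟩; exact absurd rfl hne
          · rintro ⟨hne, -⟩; exact absurd rfl hne
      have hcompl : IsConstrainedCompletion T Nx N'' := by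
        refine ⟨fun y hy => hP4 y hy (hNx y hy), ?_, ?_⟩
        · intro y hy
          rcases hP3 y hy with h | ⟨hyT, -⟩
          · exact leaves_subset_of_mem_subtrees hu y (by
              rw [leaves_node]
              exact List.mem_flatMap.mpr ⟨v, hv, hB3 y h⟩)
          · exact hyT
        · rw [hGeq]
          exact isCograph_graphOf _ T' le_rfl hTnd'
      have heq : N'' = anchored T (node false cs) Nx := hminimal N'' hsub hcompl
      have hmem : m ∈ anchored T (node false cs) Nx := Or.inr ⟨v, hvchild, hvnh, hm1⟩
      rw [← heq] at hmem
      exact hP5 hmem
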